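/- Let Y₁, …, Y_K be independent random variables with values in [0,1] and let X = Σ_{k=1}^K Y_k. Then for every δ ∈ (0,1] and every real number t, P[X ≥ t and X ≥ δ] ≤ P[X ≥ δ] · P[X ≥ t − 2]. -/

import Mathlib

open MeasureTheory ProbabilityTheory

/-- Let `Y₁, …, Y_K` be independent random variables with values in `[0,1]`
and `X = Σ_k Y_k`.  Then for every `δ ∈ (0,1]` and every real `t`,
`P[X ≥ t and X ≥ δ] ≤ P[X ≥ δ] · P[X ≥ t − 2]`. -/
theorem prob_ge_and_ge_le_mul
    {Ω : Type*} [MeasureSpace Ω] [IsProbabilityMeasure (ℙ : Measure Ω)]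
    {K : ℕ} (Y : Fin K → Ω → ℝ)
    (hYmeas : ∀ k, Measurable (Y k))
    (hYrange : ∀ k ω, Y k ω ∈ Set.Icc (0 : ℝ) 1)
    (hYindep : iIndepFun Y ℙ)
    (X : Ω → ℝ) (hX : X = fun ω => ∑ k, Y k ω)
    (δ : ℝ) (hδ0 : 0 < δ) (hδ1 : δ ≤ 1) (t : ℝ) :
    ℙ {ω | t ≤ X ω ∧ δ ≤ X ω} ≤ ℙ {ω | δ ≤ X ω} * ℙ {ω | t - 2 ≤ X ω} := by
  classical
  subst hX
  -- partial sums and tails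
  set F : ℕ → Finset (Fin K) := fun n => Finset.univ.filter (fun k : Fin K => (k : ℕ) < n)
    with hF
  set S : ℕ → Ω → ℝ := fun n ω => ∑ k ∈ F n, Y k ω with hSdef
  set T : ℕ → Ω → ℝ := fun n ω => ∑ k ∈ Finset.univ.filter (fun k : Fin K => ¬ (k : ℕ) < n),
    Y k ω with hTdef
  have hYnn : ∀ k ω, 0 ≤ Y k ω := fun k ω => (hYrange k ω).1
  have hY1 : ∀ k ω, Y k ω ≤ 1 := fun k ω => (hYrange k ω).2
  have hsplit : ∀ n ω, (∑ k, Y k ω) = S n ω + T n ω := fun n ω =>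
    (Finset.sum_filter_add_sum_filter_not Finset.univ _ _).symm
  have hS0 : ∀ ω, S 0 ω = 0 := by intro ω; simp [hSdef, hF]
  have hSK : ∀ ω, S K ω = ∑ k, Y k ω := by
    intro ω; simp [hSdef, hF, Fin.is_lt]
  have hSnn : ∀ n ω, 0 ≤ S n ω := fun n ω => Finset.sum_nonneg fun k _ => hYnn k ω
  have hTnn : ∀ n ω, 0 ≤ T n ω := fun n ω => Finset.sum_nonneg fun k _ => hYnn k ω
  have hSmono : ∀ m n, m ≤ n → ∀ ω, S m ω ≤ S n ω := by
    intro m n hmn ω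
    apply Finset.sum_le_sum_of_subset_of_nonneg
    · intro k hk
      simp only [hF, Finset.mem_filter, Finset.mem_univ, true_and] at hk ⊢
      omega
    · exact fun k _ _ => hYnn k ω
  have hSsucc : ∀ n (hn : n < K) ω, S (n + 1) ω = S n ω + Y ⟨n, hn⟩ ω := by
    intro n hn ω
    have hins : F (n + 1) = insert ⟨n, hn⟩ (F n) := by
      ext k
      simp only [hF, Finset.mem_filter, Finset.mem_univ, true_and, Finset.mem_insert,
        Fin.ext_iff]
      omega
    rw [hSdef]
    simp only
    rw [hins, Finset.sum_insert (by simp [hF])]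
    ring
  have hSmeas : ∀ n, Measurable (S n) := fun n =>
    Finset.measurable_sum _ fun k _ => hYmeas k
  have hTmeas : ∀ n, Measurable (T n) := fun n =>
    Finset.measurable_sum _ fun k _ => hYmeas k
  -- the decomposition events
  set A : ℕ → Set Ω := fun n => {ω | δ ≤ S (n + 1) ω ∧ S n ω < δ} with hAdef
  set B : ℕ → Set Ω := fun n => {ω | t - 2 ≤ T (n + 1) ω} with hBdef
  have hAmeas : ∀ n, MeasurableSet (A n) := fun n =>
    (measurableSet_le measurable_const (hSmeas (n + 1))).inter
      (measurableSet_lt (hSmeas n) measurable_const)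
  have hcover : {ω | δ ≤ ∑ k, Y k ω} = ⋃ n ∈ Finset.range K, A n := by
    ext ω
    simp only [Set.mem_setOf_eq, Set.mem_iUnion, Finset.mem_range, exists_prop]
    constructor
    · intro h
      have key : ∀ N, δ ≤ S N ω → ∃ n < N, δ ≤ S (n + 1) ω ∧ S n ω < δ := by
        intro N
        induction N with
        | zero => intro hle; rw [hS0] at hle; exact absurd hle (not_le.mpr hδ0)
        | succ N ih =>
          intro hle
          by_cases hc : S N ω < δ
          · exact ⟨N, Nat.lt_succ_self N, hle, hc⟩
          · obtain ⟨n, hn, h1, h2⟩ := ih (not_lt.mp hc)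
            exact ⟨n, hn.trans (Nat.lt_succ_self N), h1, h2⟩
      obtain ⟨n, hn, h1, h2⟩ := key K (by rw [hSK]; exact h)
      exact ⟨n, hn, h1, h2⟩
    · rintro ⟨n, hn, h1, _⟩
      calc δ ≤ S (n + 1) ω := h1
        _ ≤ S K ω := hSmono _ _ hn ω
        _ = ∑ k, Y k ω := hSK ω
  have habs : ∀ m n, m < n → ∀ ω, ω ∈ A m → ω ∉ A n := by
    intro m n hmn ω hm hn
    have : δ ≤ S n ω := le_trans hm.1 (hSmono _ _ hmn ω)
    exact absurd this (not_le.mpr hn.2)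
  have hdisj : (↑(Finset.range K) : Set ℕ).PairwiseDisjoint A := by
    intro m _ n _ hmn
    rcases lt_or_gt_of_ne hmn with h | h
    · exact Set.disjoint_left.mpr fun ω hω hω' => habs m n h ω hω hω'
    · exact Set.disjoint_right.mpr fun ω hω hω' => habs n m h ω hω hω'
  -- inclusion of the LHS event
  have hsub : {ω | t ≤ (∑ k, Y k ω) ∧ δ ≤ (∑ k, Y k ω)} ⊆
      ⋃ n ∈ Finset.range K, (A n ∩ B n) := by
    intro ω ⟨ht, hδX⟩
    have : ω ∈ ⋃ n ∈ Finset.range K, A n := hcover ▸ hδX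
    simp only [Set.mem_iUnion, Finset.mem_range, exists_prop] at this ⊢
    obtain ⟨n, hn, hA1, hA2⟩ := this
    refine ⟨n, hn, ⟨hA1, hA2⟩, ?_⟩
    have h1 : S (n + 1) ω = S n ω + Y ⟨n, hn⟩ ω := hSsucc n hn ω
    have h2 : S (n + 1) ω ≤ 2 := by
      have := hY1 ⟨n, hn⟩ ω
      linarith
    have h3 : (∑ k, Y k ω) = S (n + 1) ω + T (n + 1) ω := hsplit (n + 1) ω
    show t - 2 ≤ T (n + 1) ω
    linarith
  -- independence
  have hind : ∀ n, ℙ (A n ∩ B n) = ℙ (A n) * ℙ (B n) := by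
    intro n
    set s : Finset (Fin K) := F (n + 1) with hs
    set sc : Finset (Fin K) := Finset.univ.filter (fun k : Fin K => ¬ (k : ℕ) < n + 1)
      with hsc
    have hdisj' : Disjoint s sc := by
      rw [hs, hF, hsc]
      exact Finset.disjoint_filter_filter_not Finset.univ Finset.univ _
    have hIF := hYindep.indepFun_finset s sc hdisj' hYmeas
    set MA : Set ((i : s) → ℝ) :=
      {v | δ ≤ ∑ i, v i ∧ (∑ i, if i.val.val < n then v i else 0) < δ} with hMA
    set MB : Set ((i : sc) → ℝ) := {v | t - 2 ≤ ∑ i, v i} with hMB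
    have hmMA : MeasurableSet MA := by
      have m1 : Measurable (fun v : (i : s) → ℝ => ∑ i, v i) :=
        Finset.measurable_sum _ fun i _ => measurable_pi_apply i
      have m2 : Measurable (fun v : (i : s) → ℝ =>
          ∑ i, if i.val.val < n then v i else 0) := by
        apply Finset.measurable_sum
        intro i _
        by_cases h : i.val.val < n
        · simpa [h] using measurable_pi_apply i
        · simp [h]
      exact (measurableSet_le measurable_const m1).inter
        (measurableSet_lt m2 measurable_const)
    have hmMB : MeasurableSet MB := by
      have m1 : Measurable (fun v : (i : sc) → ℝ => ∑ i, v i) :=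
        Finset.measurable_sum _ fun i _ => measurable_pi_apply i
      exact measurableSet_le measurable_const m1
    have hsum1 : ∀ ω, (∑ i : s, Y (i : Fin K) ω) = S (n + 1) ω := by
      intro ω; rw [hSdef]; exact Finset.sum_coe_sort s (fun k => Y k ω)
    have hsum2 : ∀ ω, (∑ i : s, if i.val.val < n then Y i.val ω else 0)
        = S n ω := by
      intro ω
      rw [Finset.sum_coe_sort s (fun k : Fin K => if (k : ℕ) < n then Y k ω else 0),
        ← Finset.sum_filter]
      have : Finset.filter (fun k : Fin K => (k : ℕ) < n) s = F n := by
        rw [hs, hF]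
        ext k
        simp only [Finset.mem_filter, Finset.mem_univ, true_and]
        omega
      rw [this]
    have hsum3 : ∀ ω, (∑ i : sc, Y (i : Fin K) ω) = T (n + 1) ω := by
      intro ω; rw [hTdef]; exact Finset.sum_coe_sort sc (fun k => Y k ω)
    have hA : A n = (fun ω (i : s) => Y i ω) ⁻¹' MA := by
      ext ω
      simp only [hAdef, Set.mem_setOf_eq, Set.mem_preimage, hMA]
      rw [hsum1 ω, hsum2 ω]
    have hB : B n = (fun ω (i : sc) => Y i ω) ⁻¹' MB := by
      ext ω
      simp only [hBdef, Set.mem_setOf_eq, Set.mem_preimage, hMB]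
      rw [hsum3 ω]
    rw [hA, hB]
    exact hIF.measure_inter_preimage_eq_mul _ _ hmMA hmMB
  have hBsub : ∀ n, B n ⊆ {ω | t - 2 ≤ ∑ k, Y k ω} := by
    intro n ω hω
    have h1 : (∑ k, Y k ω) = S (n + 1) ω + T (n + 1) ω := hsplit (n + 1) ω
    have h2 : 0 ≤ S (n + 1) ω := hSnn (n + 1) ω
    have h3 : t - 2 ≤ T (n + 1) ω := hω
    show t - 2 ≤ ∑ k, Y k ω
    linarith
  calc ℙ {ω | t ≤ (∑ k, Y k ω) ∧ δ ≤ (∑ k, Y k ω)}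
      ≤ ℙ (⋃ n ∈ Finset.range K, (A n ∩ B n)) := measure_mono hsub
    _ ≤ ∑ n ∈ Finset.range K, ℙ (A n ∩ B n) := measure_biUnion_finset_le _ _
    _ = ∑ n ∈ Finset.range K, ℙ (A n) * ℙ (B n) :=
        Finset.sum_congr rfl fun n _ => hind n
    _ ≤ ∑ n ∈ Finset.range K, ℙ (A n) * ℙ {ω | t - 2 ≤ ∑ k, Y k ω} :=
        Finset.sum_le_sum fun n _ => mul_le_mul_right (measure_mono (hBsub n)) _
    _ = (∑ n ∈ Finset.range K, ℙ (A n)) * ℙ {ω | t - 2 ≤ ∑ k, Y k ω} :=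
        (Finset.sum_mul _ _ _).symm
    _ = ℙ (⋃ n ∈ Finset.range K, A n) * ℙ {ω | t - 2 ≤ ∑ k, Y k ω} := by
        rw [measure_biUnion_finset hdisj fun n _ => hAmeas n]
    _ = ℙ {ω | δ ≤ ∑ k, Y k ω} * ℙ {ω | t - 2 ≤ ∑ k, Y k ω} := by rw [← hcover]
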